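/- Strengthened double-intersection rule, special case: let A, B, C, D be compact convex planar sets, pairwise intersecting, with A∩B∩C ≠ ∅ and A∩B∩D ≠ ∅, but A∩C∩D = ∅ and B∩C∩D = ∅. Then the orientation of (A,C,D) equals the orientation of (B,C,D). -/

import Mathlib

noncomputable def det2 (p q r : ℝ × ℝ) : ℝ :=
  (q.1 - p.1) * (r.2 - p.2) - (q.2 - p.2) * (r.1 - p.1)

noncomputable def ptOrient (p q r : ℝ × ℝ) : ℝ := Real.sign (det2 p q r)

lemma det2_collinear {p q r : ℝ × ℝ} (h : det2 p q r = 0) :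
    Collinear ℝ ({p, q, r} : Set (ℝ × ℝ)) := by
  by_cases hqp : q = p
  · rw [hqp]
    have : ({p, p, r} : Set (ℝ × ℝ)) = {p, r} := Set.insert_idem ..
    rw [this]
    exact collinear_pair ℝ p r
  rw [collinear_iff_of_mem (Set.mem_insert p {q, r})]
  unfold det2 at h
  refine ⟨q - p, ?_⟩
  intro x hx
  rcases hx with hx | hx | hx
  · exact ⟨0, by simp [hx]⟩
  · exact ⟨1, by simp [hx]⟩
  · simp only [Set.mem_singleton_iff] at hx
    subst hx
    by_cases h1 : q.1 - p.1 ≠ 0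
    · refine ⟨(x.1 - p.1) / (q.1 - p.1), ?_⟩
      ext
      · simp only [Prod.fst_add, Prod.smul_fst, Prod.fst_sub, smul_eq_mul, vadd_eq_add]
        field_simp
        ring
      · simp only [Prod.snd_add, Prod.smul_snd, Prod.snd_sub, smul_eq_mul, vadd_eq_add]
        field_simp
        nlinarith [h]
    · push_neg at h1
      have h2 : q.2 - p.2 ≠ 0 := by
        intro h2
        apply hqp
        ext
        · linarith
        · linarith
      have hx1 : x.1 = p.1 := by
        have hz : (q.2 - p.2) * (x.1 - p.1) = 0 := by
          linear_combination (x.2 - p.2) * h1 - h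
        rcases mul_eq_zero.mp hz with h' | h'
        · exact absurd h' h2
        · linarith
      refine ⟨(x.2 - p.2) / (q.2 - p.2), ?_⟩
      ext
      · simp only [Prod.fst_add, Prod.smul_fst, Prod.fst_sub, smul_eq_mul, vadd_eq_add]
        rw [h1, hx1]; ring
      · simp only [Prod.snd_add, Prod.smul_snd, Prod.snd_sub, smul_eq_mul, vadd_eq_add]
        field_simp
        ring

lemma det2_ne_zero {A C D : Set (ℝ × ℝ)}
    (hA : Convex ℝ A) (hC : Convex ℝ C) (hD : Convex ℝ D)
    (hACD : A ∩ C ∩ D = ∅) :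
    ∀ x ∈ C ∩ D, ∀ y ∈ A ∩ D, ∀ z ∈ A ∩ C, det2 x y z ≠ 0 := by
  intro x hx y hy z hz h
  have hcol := det2_collinear h
  have hempty : ∀ w : ℝ × ℝ, w ∈ A → w ∈ C → w ∈ D → False := by
    intro w h1 h2 h3
    have : w ∈ A ∩ C ∩ D := ⟨⟨h1, h2⟩, h3⟩
    rw [hACD] at this; exact this
  rcases hcol.wbtw_or_wbtw_or_wbtw with hw | hw | hw
  · -- y between x and z ; x,z ∈ C so y ∈ C
    have : y ∈ C := hC.segment_subset hx.1 hz.2 (mem_segment_iff_wbtw.mpr hw)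
    exact hempty y hy.1 this hy.2
  · -- z between y and x ; y,x ∈ D so z ∈ D
    have : z ∈ D := hD.segment_subset hy.2 hx.2 (mem_segment_iff_wbtw.mpr hw)
    exact hempty z hz.1 hz.2 this
  · -- x between z and y ; z,y ∈ A so x ∈ A
    have : x ∈ A := hA.segment_subset hz.1 hy.1 (mem_segment_iff_wbtw.mpr hw)
    exact hempty x this hx.1 hx.2

lemma sign_const {A C D : Set (ℝ × ℝ)}
    (hA : Convex ℝ A) (hC : Convex ℝ C) (hD : Convex ℝ D)
    (hACD : A ∩ C ∩ D = ∅) :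
    ∀ x ∈ C ∩ D, ∀ y ∈ A ∩ D, ∀ z ∈ A ∩ C,
    ∀ x' ∈ C ∩ D, ∀ y' ∈ A ∩ D, ∀ z' ∈ A ∩ C,
      ptOrient x y z = ptOrient x' y' z' := by
  intro x hx y hy z hz x' hx' y' hy' z' hz'
  set s : Set ((ℝ × ℝ) × (ℝ × ℝ) × (ℝ × ℝ)) := (C ∩ D) ×ˢ ((A ∩ D) ×ˢ (A ∩ C)) with hs
  have hconv : Convex ℝ s :=
    (Convex.prod (hC.inter hD) (Convex.prod (hA.inter hD) (hA.inter hC)))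
  have hpre : IsPreconnected s := hconv.isPreconnected
  set f : (ℝ × ℝ) × (ℝ × ℝ) × (ℝ × ℝ) → ℝ := fun p => det2 p.1 p.2.1 p.2.2 with hf
  have hcont : Continuous f := by
    unfold f; unfold det2; fun_prop
  have himg : IsPreconnected (f '' s) := hpre.image f hcont.continuousOn
  have hzero : (0 : ℝ) ∉ f '' s := by
    rintro ⟨⟨p, q, r⟩, ⟨hp, hq, hr⟩, hval⟩
    exact det2_ne_zero hA hC hD hACD p hp q hq r hr hval
  have hmem1 : f (x, y, z) ∈ f '' s := ⟨(x, y, z), ⟨hx, hy, hz⟩, rfl⟩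
  have hmem2 : f (x', y', z') ∈ f '' s := ⟨(x', y', z'), ⟨hx', hy', hz'⟩, rfl⟩
  set a := f (x, y, z)
  set b := f (x', y', z')
  have hord := himg.ordConnected
  have key : (0 < a ∧ 0 < b) ∨ (a < 0 ∧ b < 0) := by
    rcases lt_or_gt_of_ne (fun h : a = 0 => hzero (h ▸ hmem1)) with ha | ha
    · rcases lt_or_gt_of_ne (fun h : b = 0 => hzero (h ▸ hmem2)) with hb | hb
      · exact Or.inr ⟨ha, hb⟩
      · exact absurd (hord.out hmem1 hmem2 ⟨le_of_lt ha, le_of_lt hb⟩) hzero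
    · rcases lt_or_gt_of_ne (fun h : b = 0 => hzero (h ▸ hmem2)) with hb | hb
      · exact absurd (hord.out hmem2 hmem1 ⟨le_of_lt hb, le_of_lt ha⟩) hzero
      · exact Or.inl ⟨ha, hb⟩
  unfold ptOrient
  rcases key with ⟨h1, h2⟩ | ⟨h1, h2⟩
  · rw [Real.sign_of_pos h1, Real.sign_of_pos h2]
  · rw [Real.sign_of_neg h1, Real.sign_of_neg h2]

theorem stmt_9 (A B C D : Set (ℝ × ℝ))
    (hAc : IsCompact A) (hBc : IsCompact B) (hCc : IsCompact C) (hDc : IsCompact D)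
    (hA : Convex ℝ A) (hB : Convex ℝ B) (hC : Convex ℝ C) (hD : Convex ℝ D)
    (hAB : (A ∩ B).Nonempty) (hAC : (A ∩ C).Nonempty) (hAD : (A ∩ D).Nonempty)
    (hBC : (B ∩ C).Nonempty) (hBD : (B ∩ D).Nonempty) (hCD : (C ∩ D).Nonempty)
    (hABC : (A ∩ B ∩ C).Nonempty) (hABD : (A ∩ B ∩ D).Nonempty)
    (hACD : A ∩ C ∩ D = ∅) (hBCD : B ∩ C ∩ D = ∅) :
    ∀ x ∈ C ∩ D, ∀ y ∈ A ∩ D, ∀ z ∈ A ∩ C,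
      ∀ x' ∈ C ∩ D, ∀ y' ∈ B ∩ D, ∀ z' ∈ B ∩ C,
        ptOrient x y z = ptOrient x' y' z' := by
  intro x hx y hy z hz x' hx' y' hy' z' hz'
  obtain ⟨w, ⟨hwA, hwB⟩, hwC⟩ := hABC
  obtain ⟨v, ⟨hvA, hvB⟩, hvD⟩ := hABD
  have step1 : ptOrient x y z = ptOrient x' v w :=
    sign_const hA hC hD hACD x hx y hy z hz x' hx' v ⟨hvA, hvD⟩ w ⟨hwA, hwC⟩
  have step2 : ptOrient x' v w = ptOrient x' y' z' :=
    sign_const hB hC hD hBCD x' hx' v ⟨hvB, hvD⟩ w ⟨hwB, hwC⟩ x' hx' y' hy' z' hz'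
  rw [step1, step2]
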